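/- arXiv:2302.13246 — 4 statements merged into one kernel-verified Lean document; each statement's English description precedes it below -/
import Mathlib

section
/- Let y₀, …, yₙ ∈ ℝⁿ be affinely independent with Lagrange functions ℓ₀, …, ℓₙ. If the point y_d (for some index d) is replaced by a new point x ∈ ℝⁿ with ℓ_d(x) ≠ 0, then the new set {y₀, …, y_{d−1}, x, y_{d+1}, …, yₙ} is also affinely independent. -/
open Matrix

lemma dot_sum_helper {m N : ℕ} (v : Fin m → ℝ) (W : Fin N → ℝ) (u : Fin N → Fin m → ℝ) :
    ∑ i, W i * (v ⬝ᵥ u i) = v ⬝ᵥ ∑ i, W i • u i := by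
  simp only [dotProduct, Finset.sum_apply, Pi.smul_apply, smul_eq_mul, Finset.mul_sum]
  rw [Finset.sum_comm]
  apply Finset.sum_congr rfl
  intro i _
  apply Finset.sum_congr rfl
  intro k _
  ring

/-- Replacing the point `y d` by a new point `x` with nonzero Lagrange
function value `ℓ_d(x)` preserves affine independence. -/
theorem update_preserves_affineIndependent (n : ℕ) (y : Fin (n + 1) → (Fin n → ℝ))
    (hy : AffineIndependent ℝ y)
    (ℓ : Fin (n + 1) → ℝ × (Fin n → ℝ))
    (hℓ : ∀ i j, (ℓ i).1 + (ℓ i).2 ⬝ᵥ y j = if i = j then 1 else 0)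
    (d : Fin (n + 1)) (x : Fin n → ℝ)
    (hx : (ℓ d).1 + (ℓ d).2 ⬝ᵥ x ≠ 0) :
    AffineIndependent ℝ (Function.update y d x) := by
  rw [affineIndependent_iff]
  intro s w hw0 hsum i hi
  -- extend weights by zero
  set W : Fin (n + 1) → ℝ := fun i => if i ∈ s then w i else 0 with hW
  have hW0 : ∑ i, W i = 0 := by
    rw [hW, Finset.sum_ite_mem, Finset.univ_inter, hw0]
  have hWsum : ∑ i, W i • Function.update y d x i = 0 := by
    rw [hW]
    have : ∀ i : Fin (n + 1),
        (if i ∈ s then w i else 0) • Function.update y d x i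
          = if i ∈ s then w i • Function.update y d x i else 0 := by
      intro i; split <;> simp
    simp_rw [this]
    rw [Finset.sum_ite_mem, Finset.univ_inter, hsum]
  suffices h : ∀ j, W j = 0 by
    have := h i
    rw [hW] at this
    simpa [hi] using this
  -- key: apply each affine functional
  have key : ∀ j : Fin (n + 1),
      ∑ i, W i * ((ℓ j).1 + (ℓ j).2 ⬝ᵥ Function.update y d x i) = 0 := by
    intro j
    have : ∑ i, W i * ((ℓ j).1 + (ℓ j).2 ⬝ᵥ Function.update y d x i)
        = (∑ i, W i) * (ℓ j).1 + (ℓ j).2 ⬝ᵥ ∑ i, W i • Function.update y d x i := by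
      rw [← dot_sum_helper, Finset.sum_mul, ← Finset.sum_add_distrib]
      apply Finset.sum_congr rfl
      intro i _; ring
    rw [this, hW0, hWsum]
    simp
  have hsplit : ∀ j : Fin (n + 1),
      ∑ i, W i * ((ℓ j).1 + (ℓ j).2 ⬝ᵥ Function.update y d x i)
        = W d * ((ℓ j).1 + (ℓ j).2 ⬝ᵥ x)
          + ∑ i ∈ Finset.univ.erase d, W i * (if j = i then 1 else 0) := by
    intro j
    rw [← Finset.add_sum_erase _ _ (Finset.mem_univ d)]
    congr 1
    · simp
    · apply Finset.sum_congr rfl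
      intro i hi
      rw [Function.update_of_ne (Finset.ne_of_mem_erase hi), hℓ]
  have hWd : W d = 0 := by
    have h := key d
    rw [hsplit d] at h
    have hz : ∑ i ∈ Finset.univ.erase d, W i * (if d = i then 1 else 0) = 0 := by
      apply Finset.sum_eq_zero
      intro i hi
      rw [if_neg (Ne.symm (Finset.ne_of_mem_erase hi))]
      ring
    rw [hz, add_zero] at h
    exact (mul_eq_zero.mp h).resolve_right hx
  intro j
  by_cases hjd : j = d
  · rw [hjd]; exact hWd
  · have h := key j
    rw [hsplit j, hWd, zero_mul, zero_add] at h
    have : ∑ i ∈ Finset.univ.erase d, W i * (if j = i then 1 else 0) = W j := by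
      simp_rw [mul_ite, mul_one, mul_zero]
      rw [Finset.sum_ite_eq]
      simp [hjd]
    rwa [this] at h
end

section
/- Let y₀, …, yₙ ∈ ℝⁿ be affinely independent with Lagrange functions ℓ₀, …, ℓₙ, and replace y_d by x with τ := ℓ_d(x) ≠ 0. Then the Lagrange functions of the new interpolation set are given by ℓ̂_d = ℓ_d / τ and ℓ̂_i = ℓ_i − (ℓ_i(x)/τ) ℓ_d for i ≠ d. -/
open Matrix

/-- An affine function vanishing on n+1 affinely independent points of ℝⁿ vanishes. -/
lemma aff_key (n : ℕ) (y : Fin (n + 1) → (Fin n → ℝ)) (hy : AffineIndependent ℝ y)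
    (c : ℝ) (g : Fin n → ℝ) (h : ∀ j, c + g ⬝ᵥ y j = 0) :
    ∀ z : Fin n → ℝ, c + g ⬝ᵥ z = 0 := by
  intro z
  have htop : affineSpan ℝ (Set.range y) = ⊤ := by
    rw [hy.affineSpan_eq_top_iff_card_eq_finrank_add_one]
    simp
  have hz : z ∈ affineSpan ℝ (Set.range y) := htop ▸ AffineSubspace.mem_top ℝ _ z
  obtain ⟨w, hw, rfl⟩ := eq_affineCombination_of_mem_affineSpan_of_fintype hz
  rw [Finset.affineCombination_eq_linear_combination _ _ _ hw]
  have : g ⬝ᵥ (∑ j, w j • y j) = ∑ j, w j * (g ⬝ᵥ y j) := by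
    simp only [dotProduct, Finset.mul_sum, Finset.sum_apply, Pi.smul_apply, smul_eq_mul]
    rw [Finset.sum_comm]
    congr 1; ext j; congr 1; ext i; ring
  rw [this]
  have hsum : ∑ j, w j * (c + g ⬝ᵥ y j) = 0 := by
    simp [h]
  calc c + ∑ j, w j * (g ⬝ᵥ y j)
      = ∑ j, w j * (c + g ⬝ᵥ y j) := by
        simp only [mul_add, Finset.sum_add_distrib, ← Finset.sum_mul, hw, one_mul]
    _ = 0 := hsum

lemma update_affindep (n : ℕ) (y : Fin (n + 1) → (Fin n → ℝ)) (hy : AffineIndependent ℝ y)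
    (c : ℝ) (g : Fin n → ℝ) (d : Fin (n + 1)) (x : Fin n → ℝ)
    (h0 : ∀ j, j ≠ d → c + g ⬝ᵥ y j = 0) (τ : ℝ) (hτdef : τ = c + g ⬝ᵥ x) (hτ : τ ≠ 0) :
    AffineIndependent ℝ (Function.update y d x) := by
  rw [affineIndependent_iff_of_fintype] at hy ⊢
  intro w hw hvs
  rw [Finset.weightedVSub_eq_linear_combination _ hw] at hvs
  -- apply the affine function c + g ⬝ᵥ ·
  have hdot : g ⬝ᵥ (∑ j, w j • Function.update y d x j)
      = ∑ j, w j * (g ⬝ᵥ Function.update y d x j) := by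
    simp only [dotProduct, Finset.mul_sum, Finset.sum_apply, Pi.smul_apply, smul_eq_mul]
    rw [Finset.sum_comm]
    congr 1; ext j; congr 1; ext i; ring
  have key : ∑ j, w j * (c + g ⬝ᵥ Function.update y d x j) = 0 := by
    simp only [mul_add, Finset.sum_add_distrib, ← Finset.sum_mul, hw, zero_mul, ← hdot, hvs]
    simp
  have hval : ∀ j, c + g ⬝ᵥ Function.update y d x j = if j = d then τ else 0 := by
    intro j
    by_cases hj : j = d
    · subst hj; simp [hτdef]
    · simp [Function.update_of_ne hj, h0 j hj, hj]
  have hwd : w d = 0 := by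
    have : ∑ j, w j * (if j = d then τ else 0) = w d * τ := by
      rw [Finset.sum_eq_single d] <;> simp +contextual
    simp_rw [hval] at key
    rw [this] at key
    exact (mul_eq_zero.mp key).resolve_right hτ
  -- now reduce to affine independence of y
  have hvs' : ∑ j, w j • y j = 0 := by
    rw [← hvs, Finset.sum_congr rfl]
    intro j _
    by_cases hj : j = d
    · subst hj; simp [hwd]
    · rw [Function.update_of_ne hj]
  have := hy w hw (by rwa [Finset.weightedVSub_eq_linear_combination _ hw])
  exact this

/-- Rank-one update of the Lagrange functions when one interpolation
point is exchanged. Affine functions are represented by pairs `(c, g)`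
with value `c + gᵀ x`. -/
theorem lagrange_update (n : ℕ) (y : Fin (n + 1) → (Fin n → ℝ))
    (hy : AffineIndependent ℝ y)
    (ℓ : Fin (n + 1) → ℝ × (Fin n → ℝ))
    (hℓ : ∀ i j, (ℓ i).1 + (ℓ i).2 ⬝ᵥ y j = if i = j then 1 else 0)
    (d : Fin (n + 1)) (x : Fin n → ℝ)
    (τ : ℝ) (hτdef : τ = (ℓ d).1 + (ℓ d).2 ⬝ᵥ x) (hτ : τ ≠ 0)
    (ℓ' : Fin (n + 1) → ℝ × (Fin n → ℝ))
    (hℓ' : ∀ i j, (ℓ' i).1 + (ℓ' i).2 ⬝ᵥ Function.update y d x j =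
      if i = j then 1 else 0) :
    ∀ z : Fin n → ℝ,
      ((ℓ' d).1 + (ℓ' d).2 ⬝ᵥ z = ((ℓ d).1 + (ℓ d).2 ⬝ᵥ z) / τ) ∧
      ∀ i, i ≠ d →
        (ℓ' i).1 + (ℓ' i).2 ⬝ᵥ z =
          ((ℓ i).1 + (ℓ i).2 ⬝ᵥ z) -
            (((ℓ i).1 + (ℓ i).2 ⬝ᵥ x) / τ) * ((ℓ d).1 + (ℓ d).2 ⬝ᵥ z) := by
  have hy' : AffineIndependent ℝ (Function.update y d x) :=
    update_affindep n y hy (ℓ d).1 (ℓ d).2 d x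
      (fun j hj => by simpa [Ne.symm hj] using hℓ d j) τ hτdef hτ
  have hval : ∀ i j, (ℓ i).1 + (ℓ i).2 ⬝ᵥ Function.update y d x j =
      if j = d then ((ℓ i).1 + (ℓ i).2 ⬝ᵥ x) else (if i = j then 1 else 0) := by
    intro i j
    by_cases hj : j = d
    · rw [hj]; simp
    · rw [Function.update_of_ne hj, hℓ i j]; simp [hj]
  intro z
  constructor
  · -- claim for index d
    have h0 : ∀ j, ((ℓ' d).1 - τ⁻¹ * (ℓ d).1) +
        ((ℓ' d).2 - τ⁻¹ • (ℓ d).2) ⬝ᵥ Function.update y d x j = 0 := by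
      intro j
      rw [sub_dotProduct, smul_dotProduct, smul_eq_mul]
      have h1 := hℓ' d j
      have h2 := hval d j
      have e1 : (ℓ' d).2 ⬝ᵥ Function.update y d x j =
          (if d = j then 1 else 0) - (ℓ' d).1 := by linarith
      rw [e1]
      by_cases hj : j = d
      · rw [hj] at h2 ⊢
        rw [if_pos rfl] at h2
        rw [← hτdef] at h2
        have e2 : (ℓ d).2 ⬝ᵥ Function.update y d x d = τ - (ℓ d).1 := by linarith
        rw [e2, if_pos rfl]
        field_simp
        ring
      · rw [if_neg hj, if_neg (Ne.symm hj)] at h2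
        have e2 : (ℓ d).2 ⬝ᵥ Function.update y d x j = -(ℓ d).1 := by linarith
        rw [e2, if_neg (Ne.symm hj)]
        ring
    have := aff_key n (Function.update y d x) hy' _ _ h0 z
    rw [sub_dotProduct, smul_dotProduct, smul_eq_mul] at this
    field_simp at this ⊢
    linarith
  · intro i hi
    have h0 : ∀ j, ((ℓ' i).1 - (ℓ i).1 + (((ℓ i).1 + (ℓ i).2 ⬝ᵥ x) / τ) * (ℓ d).1) +
        ((ℓ' i).2 - (ℓ i).2 + (((ℓ i).1 + (ℓ i).2 ⬝ᵥ x) / τ) • (ℓ d).2) ⬝ᵥ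
          Function.update y d x j = 0 := by
      intro j
      rw [add_dotProduct, sub_dotProduct, smul_dotProduct, smul_eq_mul]
      have h1 := hℓ' i j
      have h2 := hval i j
      have h3 := hval d j
      by_cases hj : j = d
      · rw [if_pos hj] at h2 h3
        rw [if_neg (hj ▸ hi)] at h1
        rw [← hτdef] at h3
        have h3' : (ℓ d).2 ⬝ᵥ Function.update y d x j = τ - (ℓ d).1 := by linarith
        have h2' : (ℓ i).2 ⬝ᵥ Function.update y d x j =
            (ℓ i).2 ⬝ᵥ x := by linarith
        rw [h3', h2']
        have h1' : (ℓ' i).2 ⬝ᵥ Function.update y d x j = -(ℓ' i).1 := by linarith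
        rw [h1']
        field_simp
        ring
      · rw [if_neg hj, if_neg (Ne.symm hj)] at h3
        rw [if_neg hj] at h2
        have h3' : (ℓ d).2 ⬝ᵥ Function.update y d x j = -(ℓ d).1 := by linarith
        rw [h3']
        by_cases hij : i = j
        · rw [if_pos hij] at h1 h2
          linarith
        · rw [if_neg hij] at h1 h2
          linarith
    have := aff_key n (Function.update y d x) hy' _ _ h0 z
    rw [add_dotProduct, sub_dotProduct, smul_dotProduct, smul_eq_mul] at this
    linarith
end

section
/- Let m(x) = c + gᵀ(x − x̄) + (1/2)(x − x̄)ᵀH(x − x̄) be a quadratic with symmetric H, and Δ > 0. A point x* with ‖x* − x̄‖ ≤ Δ is a global minimizer of m over the ball {x : ‖x − x̄‖ ≤ Δ} if and only if there exists λ ≥ 0 such that (H + λI)(x* − x̄) = −g, H + λI is positive semidefinite, and λ(Δ − ‖x* − x̄‖) = 0. -/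
open Matrix
open scoped RealInnerProductSpace

private lemma aux_small (c C : ℝ) (h : ∀ ε : ℝ, 0 < ε → c ≤ ε * C) : c ≤ 0 := by
  by_contra hc
  push_neg at hc
  rcases le_or_gt C 0 with hC | hC
  · have := h 1 one_pos; nlinarith
  · have h1 := h (c / (2 * C)) (by positivity)
    have h2 : c / (2 * C) * C = c / 2 := by field_simp
    rw [h2] at h1
    linarith

private lemma aux_lin (a b ε : ℝ) (hε : 0 < ε)
    (h : ∀ t : ℝ, 0 < t → t ≤ ε → 0 ≤ a * t + b * t ^ 2) : 0 ≤ a := by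
  have h2 : ∀ δ : ℝ, 0 < δ → -a ≤ δ * |b| := by
    intro δ hδ
    have ht0 : 0 < min δ ε := lt_min hδ hε
    have h1 := h (min δ ε) ht0 (min_le_right _ _)
    have hb : b * (min δ ε) ≤ |b| * (min δ ε) :=
      mul_le_mul_of_nonneg_right (le_abs_self b) ht0.le
    have hm : min δ ε ≤ δ := min_le_left _ _
    set t := min δ ε
    have k1 : -a * t ≤ b * t ^ 2 := by nlinarith [h1]
    have k2 : b * t ^ 2 ≤ |b| * t * t := by nlinarith [mul_le_mul_of_nonneg_right hb ht0.le]
    have k3 : |b| * t * t ≤ |b| * δ * t :=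
      mul_le_mul_of_nonneg_right (mul_le_mul_of_nonneg_left hm (abs_nonneg b)) ht0.le
    have k4 : -a * t ≤ δ * |b| * t := by nlinarith
    exact le_of_mul_le_mul_right (by linarith [k4]) ht0
  linarith [aux_small (-a) |b| h2]

private lemma aux_quadform (c a b : ℝ)
    (h : ∀ ε : ℝ, 0 < ε → ε ≤ 1 → 0 ≤ c + a * ε + b * ε ^ 2) : 0 ≤ c := by
  have h2 : ∀ δ : ℝ, 0 < δ → -c ≤ δ * (|a| + |b|) := by
    intro δ hδ
    have ht0 : 0 < min δ 1 := lt_min hδ one_pos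
    have h1 := h (min δ 1) ht0 (min_le_right _ _)
    have hm : min δ 1 ≤ δ := min_le_left _ _
    have hm1 : min δ 1 ≤ 1 := min_le_right _ _
    set t := min δ 1
    have k1 : a * t ≤ |a| * δ := by
      calc a * t ≤ |a| * t := mul_le_mul_of_nonneg_right (le_abs_self a) ht0.le
      _ ≤ |a| * δ := mul_le_mul_of_nonneg_left hm (abs_nonneg a)
    have k2 : b * t ^ 2 ≤ |b| * δ := by
      calc b * t ^ 2 ≤ |b| * t ^ 2 := mul_le_mul_of_nonneg_right (le_abs_self b) (sq_nonneg t)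
      _ ≤ |b| * t := mul_le_mul_of_nonneg_left (by nlinarith) (abs_nonneg b)
      _ ≤ |b| * δ := mul_le_mul_of_nonneg_left hm (abs_nonneg b)
    nlinarith
  linarith [aux_small (-c) (|a| + |b|) h2]

set_option maxHeartbeats 2000000 in
/-- Moré–Sorensen characterization of global solutions of the trust-region
subproblem. -/
theorem more_sorensen (n : ℕ) (c : ℝ) (xb g : EuclideanSpace ℝ (Fin n))
    (H : Matrix (Fin n) (Fin n) ℝ) (hH : Hᵀ = H) (Δ : ℝ) (hΔ : 0 < Δ)
    (m : EuclideanSpace ℝ (Fin n) → ℝ)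
    (hm : ∀ x, m x = c + ⟪g, x - xb⟫ +
      (1 / 2) * ⟪x - xb, Matrix.toEuclideanLin H (x - xb)⟫)
    (xs : EuclideanSpace ℝ (Fin n)) (hxs : ‖xs - xb‖ ≤ Δ) :
    (∀ x, ‖x - xb‖ ≤ Δ → m xs ≤ m x) ↔
      ∃ μ : ℝ, 0 ≤ μ ∧
        Matrix.toEuclideanLin (H + μ • 1) (xs - xb) = -g ∧
        (H + μ • (1 : Matrix (Fin n) (Fin n) ℝ)).PosSemidef ∧
        μ * (Δ - ‖xs - xb‖) = 0 := by
  classical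
  set A : EuclideanSpace ℝ (Fin n) →ₗ[ℝ] EuclideanSpace ℝ (Fin n) := Matrix.toEuclideanLin H with hA
  set s : EuclideanSpace ℝ (Fin n) := xs - xb with hs
  -- Hermitian facts
  have hHherm : H.IsHermitian := by
    ext i j
    rw [Matrix.conjTranspose_apply]
    simp only [star_trivial]
    exact (congrFun (congrFun hH j) i).symm
  have hsym : ∀ x y : EuclideanSpace ℝ (Fin n), ⟪A x, y⟫ = ⟪x, A y⟫ :=
    (Matrix.isHermitian_iff_isSymmetric.mp hHherm)
  -- toEuclideanLin of H + μ • 1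
  have hone : ∀ v : EuclideanSpace ℝ (Fin n), Matrix.toEuclideanLin (1 : Matrix (Fin n) (Fin n) ℝ) v = v := by
    intro v
    rw [Matrix.toEuclideanLin_apply, Matrix.one_mulVec]
  have hB : ∀ (μ : ℝ) (v : EuclideanSpace ℝ (Fin n)),
      Matrix.toEuclideanLin (H + μ • (1 : Matrix (Fin n) (Fin n) ℝ)) v = A v + μ • v := by
    intro μ v
    rw [map_add, _root_.map_smul]
    simp only [LinearMap.add_apply, LinearMap.smul_apply, hone v]
    rfl
  -- dot product bridge
  have hdot : ∀ (M : Matrix (Fin n) (Fin n) ℝ) (v : EuclideanSpace ℝ (Fin n)),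
      ⟪v, Matrix.toEuclideanLin M v⟫ =
        dotProduct (star (WithLp.equiv 2 (Fin n → ℝ) v))
          (M *ᵥ WithLp.equiv 2 (Fin n → ℝ) v) := by
    intro M v
    rw [EuclideanSpace.inner_eq_star_dotProduct, dotProduct_comm]; rfl
  have hherm : ∀ μ : ℝ, 0 ≤ μ →
      (H + μ • (1 : Matrix (Fin n) (Fin n) ℝ)).IsHermitian := by
    intro μ _
    have h1 : (μ • (1 : Matrix (Fin n) (Fin n) ℝ)).IsHermitian := by
      show _ = _
      rw [Matrix.conjTranspose_smul, Matrix.conjTranspose_one, star_trivial]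
    exact hHherm.add h1
  -- the quadratic in shifted coordinates
  set q : EuclideanSpace ℝ (Fin n) → ℝ := fun d => ⟪g, d⟫ + 2⁻¹ * ⟪d, A d⟫ with hq
  have hmq : ∀ x, m x = c + q (x - xb) := by
    intro x
    rw [hm x]
    simp [hq, hA]
    ring
  have hiff : (∀ x, ‖x - xb‖ ≤ Δ → m xs ≤ m x) ↔ (∀ d : EuclideanSpace ℝ (Fin n), ‖d‖ ≤ Δ → q s ≤ q d) := by
    constructor
    · intro h d hd
      have h1 := h (xb + d) (by simpa using hd)
      rw [hmq xs, hmq (xb + d)] at h1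
      simp only [add_sub_cancel_left] at h1
      linarith
    · intro h x hx
      have h1 := h (x - xb) hx
      rw [hmq xs, hmq x]
      linarith
  rw [hiff]
  -- expansion identity
  have hexp : ∀ u : EuclideanSpace ℝ (Fin n), q (s + u) = q s + ⟪A s + g, u⟫ + 2⁻¹ * ⟪u, A u⟫ := by
    intro u
    have e1 : ⟪u, A s⟫ = ⟪s, A u⟫ := (real_inner_comm (A s) u).trans (hsym s u)
    simp only [hq, map_add, inner_add_left, inner_add_right]
    rw [e1, hsym s u]
    ring
  have hnorm : ∀ u : EuclideanSpace ℝ (Fin n), ‖s + u‖ ^ 2 = ‖s‖ ^ 2 + 2 * ⟪s, u⟫ + ‖u‖ ^ 2 :=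
    fun u => norm_add_sq_real s u
  constructor
  · -- forward direction
    intro hmin
    have hqdiff : ∀ u : EuclideanSpace ℝ (Fin n), ‖s + u‖ ≤ Δ → 0 ≤ ⟪A s + g, u⟫ + 2⁻¹ * ⟪u, A u⟫ := by
      intro u hu
      have := hmin (s + u) hu
      rw [hexp u] at this
      linarith
    set r : EuclideanSpace ℝ (Fin n) := A s + g with hr
    rcases eq_or_lt_of_le hxs with hΔeq | hlt
    · -- boundary case : ‖s‖ = Δ
      have hsΔ : ‖s‖ = Δ := hΔeq
      have hs0 : s ≠ 0 := by
        intro h0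
        rw [h0, norm_zero] at hsΔ
        exact absurd hsΔ.symm (ne_of_gt hΔ)
      have hsq : ⟪s, s⟫ = Δ ^ 2 := by rw [real_inner_self_eq_norm_sq, hsΔ]
      -- step a
      have ha : ∀ d : EuclideanSpace ℝ (Fin n), ⟪s, d⟫ < 0 → 0 ≤ ⟪r, d⟫ := by
        intro d hsd
        have hd0 : d ≠ 0 := by
          intro h0; rw [h0, inner_zero_right] at hsd; exact lt_irrefl 0 hsd
        have hdn : (0:ℝ) < ‖d‖ ^ 2 := pow_pos (norm_pos_iff.mpr hd0) 2
        set ε : ℝ := -2 * ⟪s, d⟫ / ‖d‖ ^ 2 with hε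
        have hε0 : 0 < ε := by
          apply div_pos (by linarith) hdn
        apply aux_lin _ (2⁻¹ * ⟪d, A d⟫) ε hε0
        intro t ht0 htε
        have hball : ‖s + t • d‖ ≤ Δ := by
          have h1 : ‖s + t • d‖ ^ 2 = Δ ^ 2 + t * (2 * ⟪s, d⟫ + t * ‖d‖ ^ 2) := by
            rw [hnorm (t • d), real_inner_smul_right, norm_smul]
            rw [hsΔ]
            have : |t| = t := abs_of_pos ht0
            rw [Real.norm_eq_abs, this, mul_pow]
            ring
          have h2 : t * ‖d‖ ^ 2 ≤ -2 * ⟪s, d⟫ := by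
            have := (le_div_iff₀ hdn).mp htε
            linarith [mul_le_mul_of_nonneg_right htε (le_of_lt hdn),
              (div_mul_cancel₀ (-2 * ⟪s, d⟫) (ne_of_gt hdn))]
          nlinarith [norm_nonneg (s + t • d)]
        have h3 := hqdiff (t • d) hball
        rw [real_inner_smul_right, _root_.map_smul, real_inner_smul_left, real_inner_smul_right] at h3
        nlinarith [h3]
      -- step b
      have hrs : ⟪r, s⟫ ≤ 0 := by
        have h1 : ⟪s, -s⟫ < 0 := by
          rw [inner_neg_right, hsq]; nlinarith
        have := ha (-s) h1
        rw [inner_neg_right] at this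
        linarith
      -- step c
      have hperp : ∀ d : EuclideanSpace ℝ (Fin n), ⟪s, d⟫ = 0 → ⟪r, d⟫ = 0 := by
        intro d hsd
        have key : ∀ d' : EuclideanSpace ℝ (Fin n), ⟪s, d'⟫ = 0 → ⟪r, d'⟫ ≤ 0 := by
          intro d' hsd'
          have h2 : ∀ ε : ℝ, 0 < ε → ⟪r, d'⟫ ≤ ε * (-⟪r, s⟫) := by
            intro ε hε
            have h3 : ⟪s, -d' - ε • s⟫ < 0 := by
              rw [inner_sub_right, inner_neg_right, hsd', real_inner_smul_right, hsq]
              have : 0 < ε * Δ ^ 2 := by positivity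
              linarith
            have h4 := ha _ h3
            rw [inner_sub_right, inner_neg_right, real_inner_smul_right] at h4
            linarith
          exact aux_small _ _ h2
        have h1 := key d hsd
        have h2 := key (-d) (by rw [inner_neg_right, hsd, neg_zero])
        rw [inner_neg_right] at h2
        linarith
      set μ : ℝ := -⟪r, s⟫ / Δ ^ 2 with hμdef
      have hμ0 : 0 ≤ μ := div_nonneg (by linarith) (by positivity)
      have hμΔ : μ * Δ ^ 2 = -⟪r, s⟫ := by
        rw [hμdef, div_mul_cancel₀]
        positivity
      have hw : r = -(μ • s) := by
        have hws : ⟪s, r + μ • s⟫ = 0 := by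
          rw [inner_add_right, real_inner_smul_right, real_inner_comm r s, hsq]
          linarith
        have hrw := hperp _ hws
        have hww : ⟪r + μ • s, r + μ • s⟫ = 0 := by
          rw [inner_add_left, real_inner_smul_left, hrw, hws]
          ring
        have h0 := inner_self_eq_zero.mp hww
        exact eq_neg_of_add_eq_zero_left h0
      -- positive semidefiniteness
      have hsphere : ∀ d : EuclideanSpace ℝ (Fin n), ⟪s, d⟫ ≠ 0 → 0 ≤ ⟪d, A d⟫ + μ * ‖d‖ ^ 2 := by
        intro d hsd
        have hd0 : d ≠ 0 := by
          intro h0; rw [h0, inner_zero_right] at hsd; exact hsd rfl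
        have hdn : (0:ℝ) < ‖d‖ ^ 2 := pow_pos (norm_pos_iff.mpr hd0) 2
        set t : ℝ := -2 * ⟪s, d⟫ / ‖d‖ ^ 2 with ht
        have ht0 : t ≠ 0 := by
          rw [ht]
          exact div_ne_zero (by intro h; apply hsd; linarith) (ne_of_gt hdn)
        have htd : t * ‖d‖ ^ 2 = -2 * ⟪s, d⟫ := by
          rw [ht, div_mul_cancel₀ _ (ne_of_gt hdn)]
        have hball : ‖s + t • d‖ ≤ Δ := by
          have h1 : ‖s + t • d‖ ^ 2 = Δ ^ 2 := by
            rw [hnorm (t • d), real_inner_smul_right, norm_smul, Real.norm_eq_abs,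
              mul_pow, sq_abs, hsΔ]
            linear_combination t * htd
          nlinarith [norm_nonneg (s + t • d)]
        have h3 := hqdiff (t • d) hball
        rw [real_inner_smul_right, _root_.map_smul, real_inner_smul_left, real_inner_smul_right] at h3
        have hrd : ⟪r, d⟫ = -(μ * ⟪s, d⟫) := by
          rw [hw, inner_neg_left, real_inner_smul_left]
        rw [hrd] at h3
        have h5 : t * -(μ * ⟪s, d⟫) = μ * t ^ 2 * ‖d‖ ^ 2 / 2 := by
          linear_combination (-(μ * t) / 2) * htd
        rw [h5] at h3
        have ht2 : 0 < t ^ 2 := by positivity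
        nlinarith [h3, ht2]
      have hBpos : ∀ v : EuclideanSpace ℝ (Fin n), 0 ≤ ⟪v, A v⟫ + μ * ‖v‖ ^ 2 := by
        intro v
        rcases eq_or_ne ⟪s, v⟫ 0 with hsv | hsv
        · apply aux_quadform _ (2 * (⟪s, A v⟫)) (⟪s, A s⟫ + μ * Δ ^ 2)
          intro ε hε0 hε1
          have hsv' : ⟪s, v + ε • s⟫ ≠ 0 := by
            rw [inner_add_right, hsv, real_inner_smul_right, hsq, zero_add]
            positivity
          have h1 := hsphere _ hsv'
          have e1 : ⟪v, A s⟫ = ⟪s, A v⟫ := (real_inner_comm (A s) v).trans (hsym s v)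
          have e2 : ⟪v + ε • s, A (v + ε • s)⟫ =
              ⟪v, A v⟫ + 2 * ε * ⟪s, A v⟫ + ε ^ 2 * ⟪s, A s⟫ := by
            rw [map_add, _root_.map_smul, inner_add_left, inner_add_right, inner_add_right,
              real_inner_smul_left, real_inner_smul_left, real_inner_smul_right,
              real_inner_smul_right, e1]
            ring
          have e3 : ‖v + ε • s‖ ^ 2 = ‖v‖ ^ 2 + ε ^ 2 * Δ ^ 2 := by
            rw [norm_add_sq_real, real_inner_smul_right, real_inner_comm s v, hsv, norm_smul,
              Real.norm_eq_abs, mul_pow, sq_abs, hsΔ]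
            ring
          rw [e2, e3] at h1
          nlinarith [h1]
        · exact hsphere v hsv
      refine ⟨μ, hμ0, ?_, ?_, ?_⟩
      · rw [hB μ s]
        have : A s = r - g := by rw [hr]; abel
        rw [this, hw]
        abel
      · refine Matrix.PosSemidef.of_dotProduct_mulVec_nonneg (hherm μ hμ0) fun x => ?_
        have hv := hBpos ((WithLp.equiv 2 (Fin n → ℝ)).symm x)
        have := hdot (H + μ • (1 : Matrix (Fin n) (Fin n) ℝ))
          ((WithLp.equiv 2 (Fin n → ℝ)).symm x)
        rw [hB μ] at this
        rw [inner_add_right, real_inner_smul_right, real_inner_self_eq_norm_sq] at this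
        rw [(WithLp.equiv 2 (Fin n → ℝ)).apply_symm_apply] at this
        rw [← this]
        exact hv
      · rw [hsΔ, sub_self, mul_zero]
    · -- interior case : ‖s‖ < Δ
      have hgrad : ∀ d : EuclideanSpace ℝ (Fin n), 0 ≤ ⟪r, d⟫ := by
        intro d
        rcases eq_or_ne d 0 with rfl | hd0
        · rw [inner_zero_right]
        · have hdn : (0:ℝ) < ‖d‖ := norm_pos_iff.mpr hd0
          set ε : ℝ := (Δ - ‖s‖) / ‖d‖ with hε
          have hε0 : 0 < ε := div_pos (by linarith) hdn
          apply aux_lin _ (2⁻¹ * ⟪d, A d⟫) ε hε0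
          intro t ht0 htε
          have hball : ‖s + t • d‖ ≤ Δ := by
            calc ‖s + t • d‖ ≤ ‖s‖ + ‖t • d‖ := norm_add_le _ _
            _ = ‖s‖ + t * ‖d‖ := by rw [norm_smul, Real.norm_eq_abs, abs_of_pos ht0]
            _ ≤ ‖s‖ + ε * ‖d‖ := by nlinarith
            _ = Δ := by rw [hε, div_mul_cancel₀ _ (ne_of_gt hdn)]; ring
          have h3 := hqdiff (t • d) hball
          rw [real_inner_smul_right, _root_.map_smul, real_inner_smul_left,
            real_inner_smul_right] at h3
          nlinarith [h3]
      have hr0 : r = 0 := by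
        have h1 := hgrad (-r)
        rw [inner_neg_right] at h1
        have h2 : ⟪r, r⟫ = 0 := le_antisymm (by linarith) real_inner_self_nonneg
        exact inner_self_eq_zero.mp h2
      have hApos : ∀ v : EuclideanSpace ℝ (Fin n), 0 ≤ ⟪v, A v⟫ := by
        intro v
        rcases eq_or_ne v 0 with rfl | hv0
        · rw [inner_zero_left]
        · have hdn : (0:ℝ) < ‖v‖ := norm_pos_iff.mpr hv0
          set t : ℝ := (Δ - ‖s‖) / ‖v‖ with ht
          have ht0 : 0 < t := div_pos (by linarith) hdn
          have hball : ‖s + t • v‖ ≤ Δ := by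
            calc ‖s + t • v‖ ≤ ‖s‖ + ‖t • v‖ := norm_add_le _ _
            _ = ‖s‖ + t * ‖v‖ := by rw [norm_smul, Real.norm_eq_abs, abs_of_pos ht0]
            _ = Δ := by rw [ht, div_mul_cancel₀ _ (ne_of_gt hdn)]; ring
          have h3 := hqdiff (t • v) hball
          rw [hr0, inner_zero_left, _root_.map_smul, real_inner_smul_left,
            real_inner_smul_right] at h3
          nlinarith [h3, mul_pos ht0 ht0]
      refine ⟨0, le_refl 0, ?_, ?_, by ring⟩
      · rw [hB 0 s, zero_smul, add_zero]
        exact eq_neg_of_add_eq_zero_left hr0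
      · refine Matrix.PosSemidef.of_dotProduct_mulVec_nonneg (hherm 0 (le_refl 0)) fun x => ?_
        have hv := hApos ((WithLp.equiv 2 (Fin n → ℝ)).symm x)
        have h5 := hdot (H + (0:ℝ) • (1 : Matrix (Fin n) (Fin n) ℝ))
          ((WithLp.equiv 2 (Fin n → ℝ)).symm x)
        rw [hB 0, zero_smul, add_zero] at h5
        rw [(WithLp.equiv 2 (Fin n → ℝ)).apply_symm_apply] at h5
        rw [← h5]
        exact hv
  · -- reverse direction
    rintro ⟨μ, hμ0, heq, hpsd, hcomp⟩
    intro d hd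
    rw [hB μ s] at heq
    have hrs : A s + g = -(μ • s) := by
      have : A s + μ • s + g = 0 := by rw [heq]; abel
      have h2 : A s + g = -(μ • s) := by
        rw [eq_neg_iff_add_eq_zero]
        calc A s + g + μ • s = A s + μ • s + g := by abel
        _ = 0 := this
      exact h2
    have hBpos : ∀ v : EuclideanSpace ℝ (Fin n), 0 ≤ ⟪v, A v⟫ + μ * ‖v‖ ^ 2 := by
      intro v
      have h1 := hpsd.dotProduct_mulVec_nonneg (WithLp.equiv 2 (Fin n → ℝ) v)
      have h2 := hdot (H + μ • (1 : Matrix (Fin n) (Fin n) ℝ)) v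
      rw [hB μ, inner_add_right, real_inner_smul_right, real_inner_self_eq_norm_sq] at h2
      rw [← h2] at h1
      exact h1
    set u : EuclideanSpace ℝ (Fin n) := d - s with hu
    have hdu : d = s + u := by rw [hu]; abel
    have h1 : q d = q s + ⟪A s + g, u⟫ + 2⁻¹ * ⟪u, A u⟫ := by
      rw [hdu]; exact hexp u
    rw [hrs, inner_neg_left, real_inner_smul_left] at h1
    have h2 := hBpos u
    have h3 := hnorm u
    have hds : ‖s + u‖ = ‖d‖ := by rw [← hdu]
    rw [hds] at h3
    have key : 0 ≤ μ * (‖s‖ ^ 2 - ‖d‖ ^ 2) := by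
      rcases hμ0.eq_or_lt with hμz | hμpos
      · rw [← hμz, zero_mul]
      · have hΔs : ‖s‖ = Δ := by
          by_contra hne
          have hne' : Δ - ‖s‖ ≠ 0 := by
            intro h0; apply hne; linarith
          exact hne' (by
            rcases mul_eq_zero.mp hcomp with h | h
            · exact absurd h (ne_of_gt hμpos)
            · exact h)
        apply mul_nonneg hμ0
        nlinarith [norm_nonneg d, norm_nonneg s, hΔs]
    have h4 : μ * ‖d‖ ^ 2 = μ * ‖s‖ ^ 2 + 2 * (μ * ⟪s, u⟫) + μ * ‖u‖ ^ 2 := by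
      linear_combination μ * h3
    have h6 : q d - q s = 2⁻¹ * (⟪u, A u⟫ + μ * ‖u‖ ^ 2) +
        2⁻¹ * (μ * (‖s‖ ^ 2 - ‖d‖ ^ 2)) := by
      linear_combination h1 + 2⁻¹ * h4
    have h7 : 0 ≤ q d - q s := by rw [h6]; linarith [h2, key]
    linarith [h7]
end

section
/- Let Q₁ and Q₂ be quadratic polynomials on ℝⁿ both satisfying the interpolation conditions Q(yᵢ) = fᵢ for i = 1,…,m, and suppose H₀ is symmetric. If Q₁ minimizes ‖∇²Q − H₀‖_F² among feasible quadratics, then ‖∇²Q₂ − H₀‖_F² = ‖∇²Q₁ − H₀‖_F² + ‖∇²Q₂ − ∇²Q₁‖_F² (a Pythagorean identity). -/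
open Matrix

/-- Squared Frobenius norm of a real matrix. -/
def frobSq {n : ℕ} (A : Matrix (Fin n) (Fin n) ℝ) : ℝ := ∑ i, ∑ j, (A i j) ^ 2

/-- A quadratic `q = (c, g, H)` (value `c + gᵀx + ½ xᵀHx`, `H` symmetric)
interpolates the data `(y i, f i)`. -/
def IsFeasQuad {n m : ℕ} (y : Fin m → Fin n → ℝ) (f : Fin m → ℝ)
    (c : ℝ) (g : Fin n → ℝ) (H : Matrix (Fin n) (Fin n) ℝ) : Prop :=
  Hᵀ = H ∧ ∀ i, c + g ⬝ᵥ y i + (1 / 2) * (y i ⬝ᵥ H.mulVec (y i)) = f i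

/-- Frobenius inner product. -/
def finner {n : ℕ} (A B : Matrix (Fin n) (Fin n) ℝ) : ℝ := ∑ i, ∑ j, A i j * B i j

lemma frobSq_eq_finner {n : ℕ} (A : Matrix (Fin n) (Fin n) ℝ) : frobSq A = finner A A := by
  simp [frobSq, finner, sq]

lemma frobSq_add {n : ℕ} (A B : Matrix (Fin n) (Fin n) ℝ) :
    frobSq (A + B) = frobSq A + 2 * finner A B + frobSq B := by
  simp only [frobSq, finner, Matrix.add_apply, ← Finset.sum_add_distrib, Finset.mul_sum]
  apply Finset.sum_congr rfl; intro i _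
  apply Finset.sum_congr rfl; intro j _
  ring

lemma frobSq_smul {n : ℕ} (t : ℝ) (A : Matrix (Fin n) (Fin n) ℝ) :
    frobSq (t • A) = t ^ 2 * frobSq A := by
  simp [frobSq, Finset.mul_sum, mul_pow]

lemma finner_smul_right {n : ℕ} (t : ℝ) (A B : Matrix (Fin n) (Fin n) ℝ) :
    finner A (t • B) = t * finner A B := by
  simp only [finner, Matrix.smul_apply, smul_eq_mul, Finset.mul_sum]
  apply Finset.sum_congr rfl; intro i _
  apply Finset.sum_congr rfl; intro j _
  ring

lemma frobSq_nonneg {n : ℕ} (A : Matrix (Fin n) (Fin n) ℝ) : 0 ≤ frobSq A := by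
  apply Finset.sum_nonneg; intro i _
  exact Finset.sum_nonneg fun j _ => sq_nonneg _

/-- Pythagorean identity for the least Frobenius norm update: if `Q₁`
minimizes `‖∇²Q − H₀‖_F²` among feasible quadratics, then any feasible `Q₂`
satisfies `‖∇²Q₂ − H₀‖² = ‖∇²Q₁ − H₀‖² + ‖∇²Q₂ − ∇²Q₁‖²`. -/
theorem least_frobenius_pythagoras (n m : ℕ)
    (y : Fin m → Fin n → ℝ) (f : Fin m → ℝ)
    (H₀ : Matrix (Fin n) (Fin n) ℝ) (hH₀ : H₀ᵀ = H₀)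
    (c₁ c₂ : ℝ) (g₁ g₂ : Fin n → ℝ) (H₁ H₂ : Matrix (Fin n) (Fin n) ℝ)
    (hQ₁ : IsFeasQuad y f c₁ g₁ H₁) (hQ₂ : IsFeasQuad y f c₂ g₂ H₂)
    (hmin : ∀ c' g' H', IsFeasQuad y f c' g' H' →
      frobSq (H₁ - H₀) ≤ frobSq (H' - H₀)) :
    frobSq (H₂ - H₀) = frobSq (H₁ - H₀) + frobSq (H₂ - H₁) := by
  set D := H₂ - H₁ with hD
  -- feasibility of the convex combination
  have hfeas : ∀ t : ℝ, IsFeasQuad y f (c₁ + t * (c₂ - c₁)) (g₁ + t • (g₂ - g₁))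
      (H₁ + t • D) := by
    intro t
    constructor
    · simp [hD, Matrix.transpose_add, Matrix.transpose_smul, Matrix.transpose_sub,
        hQ₁.1, hQ₂.1]
    · intro i
      have h1 := hQ₁.2 i
      have h2 := hQ₂.2 i
      simp only [hD, add_dotProduct, smul_dotProduct, sub_dotProduct,
        Matrix.add_mulVec, Matrix.smul_mulVec, Matrix.sub_mulVec,
        dotProduct_add, dotProduct_smul, dotProduct_sub, smul_eq_mul]
      linear_combination (1 - t) * h1 + t * h2
  -- the key inequality for all t
  have hineq : ∀ t : ℝ, 0 ≤ t ^ 2 * frobSq D + 2 * t * finner (H₁ - H₀) D := by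
    intro t
    have := hmin _ _ _ (hfeas t)
    have hexp : H₁ + t • D - H₀ = (H₁ - H₀) + t • D := by abel
    rw [hexp, frobSq_add, frobSq_smul, finner_smul_right] at this
    linarith
  -- deduce the inner product is zero
  have hzero : finner (H₁ - H₀) D = 0 := by
    set a := finner (H₁ - H₀) D
    set b := frobSq D with hb
    have hbnn : 0 ≤ b := frobSq_nonneg D
    have hb1 : 0 < b + 1 := by linarith
    have h := hineq (-a / (b + 1))
    have e : (-a / (b + 1)) ^ 2 * b + 2 * (-a / (b + 1)) * a
        = (a ^ 2 * b - 2 * a ^ 2 * (b + 1)) / (b + 1) ^ 2 := by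
      field_simp
      ring
    rw [e] at h
    have hnum : 0 ≤ a ^ 2 * b - 2 * a ^ 2 * (b + 1) := by
      have hp : (0:ℝ) < (b + 1) ^ 2 := by positivity
      have := mul_nonneg h hp.le
      rwa [div_mul_cancel₀ _ (ne_of_gt hp)] at this
    have ha2 : a ^ 2 = 0 := by nlinarith [sq_nonneg a]
    exact pow_eq_zero_iff (two_ne_zero) |>.mp ha2
  -- conclude
  have hexp2 : H₂ - H₀ = (H₁ - H₀) + D := by rw [hD]; abel
  rw [hexp2, frobSq_add, hzero]
  ring
end
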